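/- arXiv:2205.02353 — 2 statements merged into one kernel-verified Lean document; each statement's English description precedes it below -/
import Mathlib

section
/- Let A be a small category that has a terminal object, and let A▷ denote the category obtained from A by freely adjoining a new terminal object (Mathlib's WithTerminal A). Then the canonical full inclusion A ↪ A▷ is a Dwyer map. -/
open CategoryTheory

/-- The minimal cosieve of `B` generated by the image of `I : A ⥤ B`:
the set of objects of `B` that are the codomain of some arrow whose domain lies
in the image of `I`. -/
def minCosieve {A B : Type*} [Category A] [Category B] (I : A ⥤ B) : Set B :=
  {w : B | ∃ a : A, Nonempty (I.obj a ⟶ w)}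

/-- The corestriction of `I : A ⥤ B` to the minimal cosieve generated by its image. -/
def inclW {A B : Type*} [Category A] [Category B] (I : A ⥤ B) :
    A ⥤ ObjectProperty.FullSubcategory (fun b => b ∈ minCosieve I) where
  obj a := ⟨I.obj a, a, ⟨𝟙 _⟩⟩
  map f := ObjectProperty.homMk (I.map f)
  map_id a := ObjectProperty.hom_ext _ (I.map_id a)
  map_comp f g := ObjectProperty.hom_ext _ (I.map_comp f g)

/-- A functor `I : A ⥤ B` is a Dwyer map if it is a full subcategory inclusion
(fully faithful and injective on objects), it is a sieve inclusion (classified by a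
functor `χ : B ⥤ 𝟚` with `χ⁻¹(0)` equal to the image of `I`, where `𝟚 = Fin 2` is
the two-object poset category `{0 < 1}`), and the corestriction of `I` to the
minimal cosieve `W` containing the image of `I` admits a right adjoint `R` whose
unit is the identity (a right adjoint left inverse). -/
structure IsDwyerMap {A B : Type*} [Category A] [Category B] (I : A ⥤ B) : Prop where
  full : I.Full
  faithful : I.Faithful
  injOnObj : Function.Injective I.obj
  sieve : ∃ χ : B ⥤ Fin 2, ∀ b : B, χ.obj b = 0 ↔ b ∈ Set.range I.obj
  rali : ∃ (R : ObjectProperty.FullSubcategory (fun b => b ∈ minCosieve I) ⥤ A)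
    (h : inclW I ⋙ R = 𝟭 A) (adj : inclW I ⊣ R), adj.unit = eqToHom h.symm

universe u

open CategoryTheory.Limits in
/-- If `A` has a terminal object, then the canonical inclusion `A ↪ A▷` of `A` into
the category obtained from `A` by freely adjoining a new terminal object is a
Dwyer map. -/
theorem isDwyerMap_withTerminal_incl (A : Type*) [Category A] [Limits.HasTerminal A] :
    IsDwyerMap (WithTerminal.incl (C := A)) := by
  constructor
  · infer_instance
  · infer_instance
  · intro a b h
    exact congrArg (fun x => match x with | WithTerminal.of y => y | WithTerminal.star => a) h
  · refine ⟨WithTerminal.lift (Z := (1 : Fin 2)) ((Functor.const A).obj (0 : Fin 2))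
      (fun a => homOfLE (by show (0 : Fin 2) ≤ 1; decide)) (fun x y f => Subsingleton.elim _ _), fun b => ?_⟩
    cases b with
    | of a => simpa using ⟨a, rfl⟩
    | star =>
      constructor
      · intro h
        have : (1 : Fin 2) = 0 := h
        exact absurd this (by decide)
      · rintro ⟨a, h⟩; cases h
  · letI I := WithTerminal.incl (C := A)
    letI R0 : WithTerminal A ⥤ A :=
      WithTerminal.lift (𝟭 A) (fun a => terminal.from a) (fun x y f => by simp)
    letI R : ObjectProperty.FullSubcategory (fun b => b ∈ minCosieve I) ⥤ A :=
      ObjectProperty.ι _ ⋙ R0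
    have h : inclW I ⋙ R = 𝟭 A := rfl
    refine ⟨R, h, ⟨eqToHom h.symm, ?_, ?_, ?_⟩, rfl⟩
    · exact {
        app := fun w => match w with
          | ⟨WithTerminal.of b, _⟩ => ObjectProperty.homMk (𝟙 b : b ⟶ b)
          | ⟨WithTerminal.star, _⟩ => ObjectProperty.homMk PUnit.unit
        naturality := by
          rintro ⟨(x|_), hx⟩ ⟨(y|_), hy⟩ f
          · exact (Category.comp_id f).trans (Category.id_comp f).symm
          · rfl
          · exact (f.hom : PEmpty).elim
          · rfl }
    · intro a
      show (inclW I).map (𝟙 a) ≫ _ = _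
      simp
      exact ObjectProperty.hom_ext _ (Category.id_comp _)
    · rintro ⟨(b|_), hw⟩
      · show 𝟙 b ≫ 𝟙 b = 𝟙 b
        simp
      · show 𝟙 _ ≫ terminal.from (⊤_ A) = 𝟙 (⊤_ A)
        simp [Subsingleton.elim (terminal.from (⊤_ A)) (𝟙 _)]
end

section
/- Let A be a small category with a terminal object t. Then the commutative square in Cat whose top functor 𝟙 ⥤ A picks out t, whose left functor 𝟙 ⥤ 𝟚 picks out the object 0, whose right functor is the canonical inclusion A ↪ A▷, and whose bottom functor 𝟚 ⥤ A▷ sends the unique nonidentity arrow of 𝟚 to the canonical arrow from (the image of) t to the new terminal object of A▷, is a pushout square in the category Cat of small categories. -/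
open CategoryTheory

/-- Let `A` be a small category with a terminal object `t`.  The square in `Cat`
whose top functor `𝟙 ⥤ A` picks out `t`, whose left functor `𝟙 ⥤ 𝟚` picks out `0`
(where `𝟙 = Fin 1` is the terminal category and `𝟚 = Fin 2` is the poset `{0 < 1}`),
whose right functor is the canonical inclusion `A ↪ A▷ = WithTerminal A`, and whose
bottom functor `𝟚 ⥤ A▷` sends the unique nonidentity arrow of `𝟚` to the canonical
arrow from `t` to the new terminal object, is a pushout square in `Cat`. -/
theorem isPushout_withTerminal (A : Type) [SmallCategory A] (t : A)
    (ht : Limits.IsTerminal t) :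
    IsPushout (C := Cat.{0,0}) (Z := Cat.of (Fin 1)) (X := Cat.of A) (Y := Cat.of (Fin 2))
      (P := Cat.of (WithTerminal A))
      ((Functor.const (Fin 1)).obj t).toCatHom
      ((Functor.const (Fin 1)).obj (0 : Fin 2)).toCatHom
      WithTerminal.incl.toCatHom
      (ComposableArrows.mk₁ (WithTerminal.starTerminal.from (WithTerminal.incl.obj t))).toCatHom := by
  set h : WithTerminal.incl.obj t ⟶ WithTerminal.star :=
    WithTerminal.starTerminal.from (WithTerminal.incl.obj t) with hh
  have comm : CommSq (C := Cat.{0,0}) (W := Cat.of (Fin 1)) (X := Cat.of A) (Y := Cat.of (Fin 2))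
      (Z := Cat.of (WithTerminal A)) ((Functor.const (Fin 1)).obj t).toCatHom
      ((Functor.const (Fin 1)).obj (0 : Fin 2)).toCatHom WithTerminal.incl.toCatHom
      (ComposableArrows.mk₁ h : Fin 2 ⥤ WithTerminal A).toCatHom := by
    constructor
    apply Cat.ext
    show ((Functor.const (Fin 1)).obj t ⋙ WithTerminal.incl : Fin 1 ⥤ WithTerminal A)
      = (Functor.const (Fin 1)).obj (0 : Fin 2) ⋙ ComposableArrows.mk₁ h
    exact CategoryTheory.Functor.ext (fun _ => rfl) (fun _ _ _ => by simp; erw [Category.id_comp, Category.id_comp]; rfl)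
  apply IsPushout.of_isColimit' comm
  set f01 : (0 : Fin 2) ⟶ 1 := homOfLE (by decide) with hf01
  have mk₁_f01 : (ComposableArrows.mk₁ h).map f01 = h := rfl
  -- data for the descent functor
  have e : ∀ s : Limits.PushoutCocone (C := Cat.{0,0}) (X := Cat.of (Fin 1)) (Y := Cat.of A) (Z := Cat.of (Fin 2))
      ((Functor.const (Fin 1)).obj t).toCatHom ((Functor.const (Fin 1)).obj (0 : Fin 2)).toCatHom,
      s.inl.toFunctor.obj t = s.inr.toFunctor.obj ((0 : Fin 2) : ↑(Cat.of (Fin 2))) :=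
    fun s => by exact Functor.congr_obj (congrArg Cat.Hom.toFunctor s.condition) (show ↑(Cat.of (Fin 1)) from (0 : Fin 1))
  let M : ∀ (s : Limits.PushoutCocone (C := Cat.{0,0}) (X := Cat.of (Fin 1)) (Y := Cat.of A) (Z := Cat.of (Fin 2))
      ((Functor.const (Fin 1)).obj t).toCatHom ((Functor.const (Fin 1)).obj (0 : Fin 2)).toCatHom) (x : A),
      s.inl.toFunctor.obj x ⟶ s.inr.toFunctor.obj ((1 : Fin 2) : ↑(Cat.of (Fin 2))) :=
    fun s x => s.inl.toFunctor.map (ht.from x) ≫ eqToHom (e s) ≫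
      s.inr.toFunctor.map f01
  have hM : ∀ s x y (f : x ⟶ y), s.inl.toFunctor.map f ≫ M s y = M s x := by
    intro s x y f
    simp only [M, ← Category.assoc, ← Functor.map_comp]
    exact congrArg (· ≫ _) (congrArg (· ≫ _) ((s.inl.toFunctor.map_comp f (ht.from y)).symm.trans (congrArg _ (ht.hom_ext _ _))))
  apply Limits.PushoutCocone.IsColimit.mk comm.w
    (fun s => (WithTerminal.lift s.inl.toFunctor (M s) (hM s)).toCatHom)
  · -- fac_left
    intro s
    apply Cat.ext
    show (WithTerminal.incl ⋙ WithTerminal.lift _ (M s) (hM s) : A ⥤ s.pt) = s.inl.toFunctor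
    exact CategoryTheory.Functor.ext (fun _ => rfl) (fun X Y f => by
      erw [eqToHom_refl, eqToHom_refl, Category.comp_id, Category.id_comp]
      rfl)
  · -- fac_right
    intro s
    apply Cat.ext
    show (ComposableArrows.mk₁ h ⋙ WithTerminal.lift _ (M s) (hM s) : Fin 2 ⥤ s.pt) = s.inr.toFunctor
    apply CategoryTheory.Functor.ext (fun i => ?_) (fun i j f => ?_)
    · fin_cases i
      · exact e s
      · rfl
    · fin_cases i <;> fin_cases j
      · have hf : f = 𝟙 _ := Subsingleton.elim _ (𝟙 _)
        erw [hf, CategoryTheory.Functor.map_id, CategoryTheory.Functor.map_id]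
        simp only [Category.comp_id, Category.id_comp, eqToHom_trans, eqToHom_refl]
      · have hf : f = f01 := Subsingleton.elim _ _
        rw [hf]
        show s.inl.toFunctor.map (ht.from t) ≫ eqToHom (e s) ≫ s.inr.toFunctor.map f01 = _
        have idt : s.inl.toFunctor.map (ht.from t) = 𝟙 (s.inl.toFunctor.obj t) := by
          rw [ht.hom_ext (ht.from t) (𝟙 t)]; exact CategoryTheory.Functor.map_id _ t
        rw [idt]
        simp only [Category.id_comp, eqToHom_refl, Category.comp_id]
        erw [eqToHom_refl, Category.comp_id]
        rfl
      · exact absurd (leOfHom f) (by decide)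
      · have hf : f = 𝟙 _ := Subsingleton.elim _ (𝟙 _)
        erw [hf, CategoryTheory.Functor.map_id, CategoryTheory.Functor.map_id]
        simp only [Category.comp_id, Category.id_comp, eqToHom_trans, eqToHom_refl]
  · -- uniq
    intro s m hm1 hm2
    have hm1' : (WithTerminal.incl ⋙ m.toFunctor : A ⥤ s.pt) = s.inl.toFunctor := congrArg Cat.Hom.toFunctor hm1
    have hm2' : (ComposableArrows.mk₁ h ⋙ m.toFunctor : Fin 2 ⥤ s.pt) = s.inr.toFunctor := congrArg Cat.Hom.toFunctor hm2
    apply Cat.ext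
    show (m.toFunctor : WithTerminal A ⥤ s.pt) = WithTerminal.lift s.inl.toFunctor (M s) (hM s)
    apply CategoryTheory.Functor.ext (fun X => ?_) (fun X Y f => ?_)
    · rcases X with x | _
      · exact Functor.congr_obj hm1' x
      · exact Functor.congr_obj hm2' (show ↑(Cat.of (Fin 2)) from (1 : Fin 2))
    · rcases X with x | _ <;> rcases Y with y | _
      · exact Functor.congr_hom hm1' f
      · -- of x ⟶ star
        have key : (f : WithTerminal.of x ⟶ WithTerminal.star) =
            WithTerminal.incl.map (ht.from x) ≫ (ComposableArrows.mk₁ h).map f01 := rfl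
        have c1 : m.toFunctor.map (WithTerminal.incl.map (ht.from x)) =
            eqToHom (Functor.congr_obj hm1' x) ≫ s.inl.toFunctor.map (ht.from x) ≫
              eqToHom (Functor.congr_obj hm1' t).symm := Functor.congr_hom hm1' (ht.from x)
        have c2 : m.toFunctor.map ((ComposableArrows.mk₁ h).map f01) =
            eqToHom (Functor.congr_obj hm2' (show ↑(Cat.of (Fin 2)) from (0 : Fin 2))) ≫
              s.inr.toFunctor.map f01 ≫
              eqToHom (Functor.congr_obj hm2' (show ↑(Cat.of (Fin 2)) from (1 : Fin 2))).symm :=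
          Functor.congr_hom hm2' f01
        erw [key, CategoryTheory.Functor.map_comp, c1, c2]
        show _ = eqToHom _ ≫ (s.inl.toFunctor.map (ht.from x) ≫ eqToHom (e s) ≫ s.inr.toFunctor.map f01) ≫ eqToHom _
        simp only [Category.assoc, eqToHom_trans, eqToHom_trans_assoc]
        erw [Category.assoc, Category.assoc, eqToHom_trans_assoc]
        rfl
      · exact (WithTerminal.false_of_from_star f).elim
      · -- star ⟶ star
        have hf : f = 𝟙 WithTerminal.star := rfl
        erw [hf, CategoryTheory.Functor.map_id, CategoryTheory.Functor.map_id]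
        simp only [Category.comp_id, Category.id_comp, eqToHom_trans, eqToHom_refl]
end
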